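/- If G is a finite simple graph and v ∈ V(G), then γ*_{rk}(G) − min{Δ(G)+1, k} ≤ γ*_{rk}(G − v) ≤ γ*_{rk}(G), where Δ(G) is the maximum degree of G and G − v is the graph obtained by deleting v and its incident edges. -/

import Mathlib

open SimpleGraph Finset

/-- A `k`-rainbow dominating function on a graph `H`. -/
def IsRDF {W : Type*} (H : SimpleGraph W) (k : ℕ) (f : W → Finset (Fin k)) : Prop :=
  ∀ w, f w = ∅ → ∀ c : Fin k, ∃ u, H.Adj w u ∧ c ∈ f u

/-- The weight of a rainbow dominating function. -/
noncomputable def rdfWeight {W : Type*} [Fintype W] {k : ℕ} (f : W → Finset (Fin k)) : ℕ :=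
  ∑ w, (f w).card

/-- The `k`-rainbow domination number of a graph. -/
noncomputable def rdn {W : Type*} [Fintype W] (H : SimpleGraph W) (k : ℕ) : ℕ :=
  sInf {n | ∃ f : W → Finset (Fin k), IsRDF H k f ∧ rdfWeight f = n}

/-- The middle graph of `G`, on vertex set `V(G) ⊕ E(G)`. -/
def middleGraph {V : Type*} (G : SimpleGraph V) : SimpleGraph (V ⊕ G.edgeSet) where
  Adj x y :=
    match x, y with
    | Sum.inl _, Sum.inl _ => False
    | Sum.inl v, Sum.inr e => v ∈ (e : Sym2 V)
    | Sum.inr e, Sum.inl v => v ∈ (e : Sym2 V)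
    | Sum.inr e, Sum.inr f => e ≠ f ∧ ∃ v, v ∈ (e : Sym2 V) ∧ v ∈ (f : Sym2 V)
  symm := by
    constructor
    rintro (v | e) (w | f) h
    · exact h.elim
    · exact h
    · exact h
    · exact ⟨Ne.symm h.1, h.2.imp fun v hv => ⟨hv.2, hv.1⟩⟩
  loopless := by
    constructor
    rintro (v | e) h
    · exact h.elim
    · exact h.1 rfl

/-- The middle `k`-rainbow domination number `γ*_{rk}(G)`. -/
noncomputable def mrdn {V : Type*} [Fintype V] (G : SimpleGraph V) (k : ℕ) : ℕ :=
  letI := Classical.decEq V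
  letI : DecidableRel G.Adj := fun _ _ => Classical.dec _
  rdn (middleGraph G) k

/-- The `k`-rainbow domatic number: the maximum size of a family of `k`-rainbow
dominating functions with `∑ i |f i v| ≤ k` for each vertex `v`. -/
noncomputable def rdomatic {W : Type*} (H : SimpleGraph W) (k : ℕ) : ℕ :=
  sSup {d | ∃ F : Fin d → W → Finset (Fin k), Function.Injective F ∧
    (∀ i, IsRDF H k (F i)) ∧ ∀ w, (∑ i, (F i w).card) ≤ k}

/-- The matching number `α'(G)`. -/
noncomputable def matchingNumber {V : Type*} [Fintype V] (G : SimpleGraph V) : ℕ :=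
  sSup {n | ∃ M : Finset (Sym2 V), ↑M ⊆ G.edgeSet ∧
    (∀ e ∈ M, ∀ f ∈ M, e ≠ f → ∀ v : V, ¬(v ∈ e ∧ v ∈ f)) ∧ M.card = n}

section Helpers

open scoped Classical

variable {V : Type*} [DecidableEq V] {v : V} {G : SimpleGraph V}

lemma not_mem_map (e : Sym2 {w : V // w ≠ v}) : v ∉ Sym2.map Subtype.val e := by
  intro h
  obtain ⟨b, _, hb⟩ := Sym2.mem_map.mp h
  exact b.2 hb

lemma mem_map_iff (w : {w : V // w ≠ v}) (e : Sym2 {w : V // w ≠ v}) :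
    w.val ∈ Sym2.map Subtype.val e ↔ w ∈ e := by
  constructor
  · intro h
    obtain ⟨b, hb, hbe⟩ := Sym2.mem_map.mp h
    rwa [Subtype.val_injective hbe] at hb
  · intro h; exact Sym2.mem_map.mpr ⟨w, h, rfl⟩

lemma map_edge_mem {e : Sym2 {w : V // w ≠ v}}
    (he : e ∈ (G.comap (Subtype.val : {w : V // w ≠ v} → V)).edgeSet) :
    Sym2.map Subtype.val e ∈ G.edgeSet := by
  induction e using Sym2.ind with
  | _ a b => simpa using he

def liftE (e : (G.comap (Subtype.val : {w : V // w ≠ v} → V)).edgeSet) : G.edgeSet :=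
  ⟨Sym2.map Subtype.val e.1, map_edge_mem e.2⟩

lemma liftE_injective :
    Function.Injective (liftE (G := G) (v := v)) := by
  intro e f h
  exact Subtype.ext (Sym2.map.injective Subtype.val_injective (congrArg Subtype.val h))

lemma v_not_mem_liftE (e : (G.comap (Subtype.val : {w : V // w ≠ v} → V)).edgeSet) :
    v ∉ (liftE e : Sym2 V) := not_mem_map e.1

lemma exists_liftE : ∀ e : Sym2 V, e ∈ G.edgeSet → v ∉ e →
    ∃ e' : (G.comap (Subtype.val : {w : V // w ≠ v} → V)).edgeSet,
      Sym2.map Subtype.val (e' : Sym2 {w : V // w ≠ v}) = e := by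
  intro e
  induction e using Sym2.ind with
  | _ a b =>
    intro he hv
    have ha : a ≠ v := fun h => hv (by rw [← h]; exact Sym2.mem_mk_left a b)
    have hb : b ≠ v := fun h => hv (by rw [← h]; exact Sym2.mem_mk_right a b)
    exact ⟨⟨s(⟨a, ha⟩, ⟨b, hb⟩), by simpa using he⟩, by simp⟩

noncomputable def downE (e : G.edgeSet) (hv : v ∉ (e : Sym2 V)) :
    (G.comap (Subtype.val : {w : V // w ≠ v} → V)).edgeSet :=
  (exists_liftE (e : Sym2 V) e.2 hv).choose

lemma liftE_downE (e : G.edgeSet) (hv : v ∉ (e : Sym2 V)) : liftE (downE e hv) = e :=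
  Subtype.ext (exists_liftE (e : Sym2 V) e.2 hv).choose_spec

lemma downE_liftE (e' : (G.comap (Subtype.val : {w : V // w ≠ v} → V)).edgeSet)
    (h : v ∉ (liftE e' : Sym2 V)) : downE (liftE e') h = e' :=
  liftE_injective (by rw [liftE_downE])

def iota : ({w : V // w ≠ v} ⊕ (G.comap (Subtype.val : {w : V // w ≠ v} → V)).edgeSet) →
    V ⊕ G.edgeSet
  | Sum.inl w => Sum.inl w.val
  | Sum.inr e => Sum.inr (liftE e)

lemma iota_adj (x y) :
    (middleGraph (G.comap (Subtype.val : {w : V // w ≠ v} → V))).Adj x y ↔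
    (middleGraph G).Adj (iota x) (iota y) := by
  rcases x with w | e <;> rcases y with w' | e'
  · exact Iff.rfl
  · exact (mem_map_iff w e'.1).symm
  · exact (mem_map_iff w' e.1).symm
  · constructor
    · rintro ⟨hne, u, hu1, hu2⟩
      exact ⟨fun h => hne (liftE_injective h), u.val,
        (mem_map_iff u _).mpr hu1, (mem_map_iff u _).mpr hu2⟩
    · rintro ⟨hne, u, hu1, hu2⟩
      refine ⟨fun h => hne (congrArg liftE h), ?_⟩
      obtain ⟨b, hb, rfl⟩ := Sym2.mem_map.mp hu1
      exact ⟨b, hb, (mem_map_iff b _).mp hu2⟩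


set_option linter.unusedSectionVars false

noncomputable def eFin {V : Type*} [Fintype V] [DecidableEq V] (G : SimpleGraph V) :
    Fintype G.edgeSet := by
  classical
  exact Subtype.fintype _

lemma univ_isRDF {W : Type*} (H : SimpleGraph W) (k : ℕ) :
    IsRDF H k (fun _ => (Finset.univ : Finset (Fin k))) := by
  intro w hw c
  exact absurd ((show (Finset.univ : Finset (Fin k)) = ∅ from hw) ▸ Finset.mem_univ c) (Finset.notMem_empty c)

lemma empty_isRDF_zero {W : Type*} (H : SimpleGraph W) :
    IsRDF H 0 (fun _ => (∅ : Finset (Fin 0))) := fun _ _ c => c.elim0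

lemma rdn_mem {W : Type*} [Fintype W] (H : SimpleGraph W) (k : ℕ) :
    ∃ f : W → Finset (Fin k), IsRDF H k f ∧ rdfWeight f = rdn H k := by
  have h : rdn H k ∈ {n | ∃ f : W → Finset (Fin k), IsRDF H k f ∧ rdfWeight f = n} :=
    Nat.sInf_mem ⟨_, _, univ_isRDF H k, rfl⟩
  exact h

lemma rdn_le {W : Type*} [Fintype W] (H : SimpleGraph W) (k : ℕ)
    (f : W → Finset (Fin k)) (hf : IsRDF H k f) : rdn H k ≤ rdfWeight f :=
  Nat.sInf_le ⟨f, hf, rfl⟩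

lemma sum_comp_le {α β : Type*} [Fintype α] [Fintype β] [DecidableEq β]
    (i : α → β) (hi : Function.Injective i) (h : β → ℕ) (t : Finset β)
    (ht : ∀ a, i a ∈ t) : ∑ a, h (i a) ≤ ∑ b ∈ t, h b := by
  rw [← Finset.sum_image (f := h) (g := i) (fun a _ b _ hab => hi hab)]
  refine Finset.sum_le_sum_of_subset ?_
  intro b hb
  obtain ⟨a, -, rfl⟩ := Finset.mem_image.mp hb
  exact ht a

variable [Fintype V]

/-- Extra labels collected at `w` from the edge `wv`, if present. -/
noncomputable def exEdge (k : ℕ) (f : V ⊕ G.edgeSet → Finset (Fin k))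
    (w : {w : V // w ≠ v}) : Finset (Fin k) :=
  if h : G.Adj w.val v then f (Sum.inr ⟨s(w.val, v), (G.mem_edgeSet).mpr h⟩) else ∅

/-- The restriction of an RDF on `M(G)` to `M(G - v)`. -/
noncomputable def restrictRDF (k : ℕ) (f : V ⊕ G.edgeSet → Finset (Fin k)) :
    ({w : V // w ≠ v} ⊕ (G.comap (Subtype.val : {w : V // w ≠ v} → V)).edgeSet) →
      Finset (Fin k)
  | Sum.inl w => f (Sum.inl w.val) ∪ exEdge k f w
  | Sum.inr e => f (Sum.inr (liftE e))

lemma restrictRDF_isRDF (k : ℕ) (f : V ⊕ G.edgeSet → Finset (Fin k))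
    (hf : IsRDF (middleGraph G) k f) :
    IsRDF (middleGraph (G.comap (Subtype.val : {w : V // w ≠ v} → V))) k
      (restrictRDF k f) := by
  rintro (w | e) hx c
  · have h1 : f (Sum.inl w.val) = ∅ := (Finset.union_eq_empty.mp hx).1
    have h2 := (Finset.union_eq_empty.mp hx).2
    obtain ⟨u, hadj, hc⟩ := hf (Sum.inl w.val) h1 c
    rcases u with u | e
    · exact absurd hadj (fun h => h)
    · by_cases hv : v ∈ (e : Sym2 V)
      · exfalso
        have he : (e : Sym2 V) = s(w.val, v) :=
          (Sym2.mem_and_mem_iff w.2).mp ⟨hadj, hv⟩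
        have hadj' : G.Adj w.val v := by
          rw [← SimpleGraph.mem_edgeSet, ← he]; exact e.2
        rw [exEdge, dif_pos hadj'] at h2
        have he2 : e = ⟨s(w.val, v), (G.mem_edgeSet).mpr hadj'⟩ := Subtype.ext he
        rw [he2, h2] at hc
        exact Finset.notMem_empty c hc
      · obtain ⟨e', he'⟩ := exists_liftE (e : Sym2 V) e.2 hv
        refine ⟨Sum.inr e', ?_, ?_⟩
        · show w ∈ (e' : Sym2 _)
          rw [← mem_map_iff, he']; exact hadj
        · show c ∈ f (Sum.inr (liftE e'))
          rw [show liftE e' = e from Subtype.ext he']; exact hc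
  · obtain ⟨u, hadj, hc⟩ := hf (Sum.inr (liftE e)) hx c
    rcases u with u | e2
    · have hadj' : u ∈ Sym2.map Subtype.val e.1 := hadj
      have hu : u ≠ v := fun h => not_mem_map e.1 (h ▸ hadj')
      refine ⟨Sum.inl ⟨u, hu⟩, (mem_map_iff ⟨u, hu⟩ e.1).mp hadj', ?_⟩
      exact Finset.mem_union_left _ hc
    · obtain ⟨hne, u, hu1, hu2⟩ := hadj
      have hu1' : u ∈ Sym2.map Subtype.val e.1 := hu1
      have hu : u ≠ v := fun h => not_mem_map e.1 (h ▸ hu1')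
      by_cases hv2 : v ∈ (e2 : Sym2 V)
      · have he2 : (e2 : Sym2 V) = s(u, v) := (Sym2.mem_and_mem_iff hu).mp ⟨hu2, hv2⟩
        have hadj' : G.Adj u v := by
          rw [← SimpleGraph.mem_edgeSet, ← he2]; exact e2.2
        refine ⟨Sum.inl ⟨u, hu⟩, (mem_map_iff ⟨u, hu⟩ e.1).mp hu1', ?_⟩
        show c ∈ f (Sum.inl u) ∪ _
        apply Finset.mem_union_right
        rw [exEdge, dif_pos hadj']
        rw [show (⟨s(u, v), (G.mem_edgeSet).mpr hadj'⟩ : G.edgeSet) = e2 from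
          (Subtype.ext he2).symm]
        exact hc
      · obtain ⟨e2', he2'⟩ := exists_liftE (e2 : Sym2 V) e2.2 hv2
        have hlift : liftE e2' = e2 := Subtype.ext he2'
        refine ⟨Sum.inr e2', ⟨?_, ?_⟩, ?_⟩
        · intro h
          exact hne (by rw [h, hlift])
        · exact ⟨⟨u, hu⟩, (mem_map_iff ⟨u, hu⟩ e.1).mp hu1',
            by rw [← mem_map_iff, he2']; exact hu2⟩
        · show c ∈ f (Sum.inr (liftE e2'))
          rw [hlift]; exact hc

/-- The edge `wv` as an element of the edge set. -/
def vEdge (q : {w : {w : V // w ≠ v} // G.Adj w.val v}) : G.edgeSet :=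
  ⟨s(q.1.1, v), (G.mem_edgeSet).mpr q.2⟩

lemma vEdge_injective : Function.Injective (vEdge (G := G) (v := v)) := by
  intro q q' h
  have h2 : s(q.1.1, v) = s(q'.1.1, v) := congrArg Subtype.val h
  exact Subtype.ext (Subtype.ext (Sym2.congr_left.mp h2))

lemma restrictRDF_weight (k : ℕ) (f : V ⊕ G.edgeSet → Finset (Fin k))
    (i1 : Fintype ({w : V // w ≠ v} ⊕ (G.comap (Subtype.val : {w : V // w ≠ v} → V)).edgeSet))
    (i2 : Fintype (V ⊕ G.edgeSet)) :
    @rdfWeight _ i1 k (restrictRDF k f) ≤ @rdfWeight _ i2 k f := by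
  letI := eFin G
  letI := eFin (G.comap (Subtype.val : {w : V // w ≠ v} → V))
  obtain rfl : i2 = instFintypeSum _ _ := Subsingleton.elim _ _
  obtain rfl : i1 = instFintypeSum _ _ := Subsingleton.elim _ _
  rw [rdfWeight, rdfWeight, Fintype.sum_sum_type, Fintype.sum_sum_type]
  simp only [restrictRDF]
  have hA : ∑ w : {w : V // w ≠ v}, (f (Sum.inl w.val) ∪ exEdge k f w).card ≤
      (∑ w : {w : V // w ≠ v}, (f (Sum.inl w.val)).card) +
        ∑ w : {w : V // w ≠ v}, (exEdge k f w).card := by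
    rw [← Finset.sum_add_distrib]
    exact Finset.sum_le_sum fun w _ => Finset.card_union_le _ _
  have hB : ∑ w : {w : V // w ≠ v}, (f (Sum.inl w.val)).card ≤
      ∑ u : V, (f (Sum.inl u)).card := by
    have := sum_comp_le (Subtype.val : {w : V // w ≠ v} → V) Subtype.val_injective
      (fun u => (f (Sum.inl u)).card) Finset.univ (fun a => Finset.mem_univ _)
    simpa using this
  have hC : ∑ w : {w : V // w ≠ v}, (exEdge k f w).card ≤
      ∑ e ∈ Finset.univ.filter (fun e : G.edgeSet => v ∈ (e : Sym2 V)),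
        (f (Sum.inr e)).card := by
    have h0 : ∑ w : {w : V // w ≠ v}, (exEdge k f w).card =
        ∑ w ∈ Finset.univ.filter (fun w : {w : V // w ≠ v} => G.Adj w.val v),
          (exEdge k f w).card := by
      symm
      apply Finset.sum_subset (Finset.filter_subset _ _)
      intro w _ hw
      simp only [Finset.mem_filter, Finset.mem_univ, true_and] at hw
      simp [exEdge, dif_neg hw]
    rw [h0, Finset.sum_subtype
      (Finset.univ.filter (fun w : {w : V // w ≠ v} => G.Adj w.val v))
      (p := fun w : {w : V // w ≠ v} => G.Adj w.val v) (by simp)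
      (fun w => (exEdge k f w).card)]
    have h1 : ∀ q : {w : {w : V // w ≠ v} // G.Adj w.val v},
        (exEdge k f q.1).card = (f (Sum.inr (vEdge q))).card := by
      intro q
      simp only [exEdge, vEdge, dif_pos q.2]
    calc ∑ q : {w : {w : V // w ≠ v} // G.Adj w.val v}, (exEdge k f q.1).card
        = ∑ q : {w : {w : V // w ≠ v} // G.Adj w.val v},
            (f (Sum.inr (vEdge q))).card := Finset.sum_congr rfl fun q _ => h1 q
      _ ≤ _ := sum_comp_le vEdge vEdge_injective (fun e => (f (Sum.inr e)).card) _
            (fun q => Finset.mem_filter.mpr ⟨Finset.mem_univ _, by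
              show v ∈ (s(q.1.1, v) : Sym2 V); simp⟩)
  have hD : ∑ e' : (G.comap (Subtype.val : {w : V // w ≠ v} → V)).edgeSet,
      (f (Sum.inr (liftE e'))).card ≤
      ∑ e ∈ Finset.univ.filter (fun e : G.edgeSet => v ∉ (e : Sym2 V)),
        (f (Sum.inr e)).card :=
    sum_comp_le liftE liftE_injective (fun e => (f (Sum.inr e)).card) _
      (fun e' => Finset.mem_filter.mpr ⟨Finset.mem_univ _, v_not_mem_liftE e'⟩)
  have hE : (∑ e ∈ Finset.univ.filter (fun e : G.edgeSet => v ∈ (e : Sym2 V)),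
        (f (Sum.inr e)).card) +
      ∑ e ∈ Finset.univ.filter (fun e : G.edgeSet => v ∉ (e : Sym2 V)),
        (f (Sum.inr e)).card = ∑ e : G.edgeSet, (f (Sum.inr e)).card :=
    Finset.sum_filter_add_sum_filter_not _ _ _
  omega

lemma lemA (G : SimpleGraph V) (v : V) (k : ℕ)
    (i1 : Fintype ({w : V // w ≠ v} ⊕ (G.comap (Subtype.val : {w : V // w ≠ v} → V)).edgeSet))
    (i2 : Fintype (V ⊕ G.edgeSet)) :
    @rdn _ i1 (middleGraph (G.comap (Subtype.val : {w : V // w ≠ v} → V))) k ≤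
      @rdn _ i2 (middleGraph G) k := by
  obtain ⟨f, hf, hw⟩ := @rdn_mem _ i2 (middleGraph G) k
  calc @rdn _ i1 (middleGraph (G.comap (Subtype.val : {w : V // w ≠ v} → V))) k
      ≤ @rdfWeight _ i1 k (restrictRDF k f) :=
        @rdn_le _ i1 _ k _ (restrictRDF_isRDF k f hf)
    _ ≤ @rdfWeight _ i2 k f := restrictRDF_weight k f i1 i2
    _ = @rdn _ i2 (middleGraph G) k := hw

/-- Extension of an RDF on `M(G-v)` to `M(G)` with value `A` at `v` and `B` at edges at `v`. -/
noncomputable def extendRDF (k : ℕ) (A B : Finset (Fin k))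
    (g : ({w : V // w ≠ v} ⊕ (G.comap (Subtype.val : {w : V // w ≠ v} → V)).edgeSet) →
      Finset (Fin k)) : V ⊕ G.edgeSet → Finset (Fin k)
  | Sum.inl u => if h : u = v then A else g (Sum.inl ⟨u, h⟩)
  | Sum.inr e => if h : v ∈ (e : Sym2 V) then B else g (Sum.inr (downE e h))

lemma extend_iota (k : ℕ) (A B : Finset (Fin k))
    (g : ({w : V // w ≠ v} ⊕ (G.comap (Subtype.val : {w : V // w ≠ v} → V)).edgeSet) →
      Finset (Fin k)) : ∀ y, extendRDF k A B g (iota y) = g y := by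
  rintro (w | e')
  · show (if h : w.val = v then A else g (Sum.inl ⟨w.val, h⟩)) = g (Sum.inl w)
    rw [dif_neg w.2]
  · show (if h : v ∈ (liftE e' : Sym2 V) then B else g (Sum.inr (downE (liftE e') h))) =
      g (Sum.inr e')
    rw [dif_neg (v_not_mem_liftE e'), downE_liftE]

lemma extend_isRDF (k : ℕ) (A B : Finset (Fin k))
    (hA : ∀ _ : Fin k, A ≠ ∅) (hB : B = ∅ → ∀ c : Fin k, c ∈ A)
    (g : ({w : V // w ≠ v} ⊕ (G.comap (Subtype.val : {w : V // w ≠ v} → V)).edgeSet) →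
      Finset (Fin k))
    (hg : IsRDF (middleGraph (G.comap (Subtype.val : {w : V // w ≠ v} → V))) k g) :
    IsRDF (middleGraph G) k (extendRDF k A B g) := by
  rintro (u | e) hx c
  · by_cases h : u = v
    · subst h
      have hA0 : A = ∅ := by simpa [extendRDF] using hx
      exact absurd hA0 (hA c)
    · have hg0 : g (Sum.inl ⟨u, h⟩) = ∅ := by simpa [extendRDF, dif_neg h] using hx
      obtain ⟨y, hyadj, hyc⟩ := hg _ hg0 c
      refine ⟨iota y, ?_, ?_⟩
      · exact (iota_adj (Sum.inl ⟨u, h⟩) y).mp hyadj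
      · rw [extend_iota]; exact hyc
  · by_cases h : v ∈ (e : Sym2 V)
    · have hB0 : B = ∅ := by simpa [extendRDF, dif_pos h] using hx
      refine ⟨Sum.inl v, h, ?_⟩
      show c ∈ (if h : v = v then A else _)
      rw [dif_pos rfl]
      exact hB hB0 c
    · have hg0 : g (Sum.inr (downE e h)) = ∅ := by simpa [extendRDF, dif_neg h] using hx
      obtain ⟨y, hyadj, hyc⟩ := hg _ hg0 c
      refine ⟨iota y, ?_, ?_⟩
      · have h2 := (iota_adj (Sum.inr (downE e h)) y).mp hyadj
        rw [show iota (Sum.inr (downE e h)) = Sum.inr e from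
          congrArg Sum.inr (liftE_downE e h)] at h2
        exact h2
      · rw [extend_iota]; exact hyc

/-- Edges not containing `v` are in bijection with edges of `G - v`. -/
noncomputable def vFreeEquiv (G : SimpleGraph V) (v : V) :
    {e : G.edgeSet // v ∉ (e : Sym2 V)} ≃
      (G.comap (Subtype.val : {w : V // w ≠ v} → V)).edgeSet where
  toFun q := downE q.1 q.2
  invFun e' := ⟨liftE e', v_not_mem_liftE e'⟩
  left_inv q := Subtype.ext (liftE_downE q.1 q.2)
  right_inv e' := downE_liftE e' _

lemma card_vedges_le [DecidableRel G.Adj] (iE : Fintype ↥G.edgeSet) :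
    (Finset.filter (fun e : G.edgeSet => v ∈ (e : Sym2 V)) (@Finset.univ _ iE)).card ≤
      G.degree v := by
  rw [← SimpleGraph.card_neighborFinset_eq_degree]
  apply Finset.card_le_card_of_injOn
    (fun e : G.edgeSet => if h : v ∈ (e : Sym2 V) then Sym2.Mem.other h else v)
  · intro e he
    simp only [Finset.mem_coe, Finset.mem_filter] at he
    dsimp only
    rw [dif_pos he.2, Finset.mem_coe, SimpleGraph.mem_neighborFinset, ← SimpleGraph.mem_edgeSet,
      Sym2.other_spec he.2]
    exact e.2
  · intro e1 h1 e2 h2 heq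
    simp only [Finset.coe_filter, Set.mem_setOf_eq] at h1 h2
    dsimp only at heq
    rw [dif_pos h1.2, dif_pos h2.2] at heq
    apply Subtype.ext
    rw [← Sym2.other_spec h1.2, ← Sym2.other_spec h2.2, heq]

lemma extend_weight [DecidableRel G.Adj] (k : ℕ) (A B : Finset (Fin k))
    (g : ({w : V // w ≠ v} ⊕ (G.comap (Subtype.val : {w : V // w ≠ v} → V)).edgeSet) →
      Finset (Fin k))
    (i1 : Fintype ({w : V // w ≠ v} ⊕ (G.comap (Subtype.val : {w : V // w ≠ v} → V)).edgeSet))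
    (i2 : Fintype (V ⊕ G.edgeSet)) :
    @rdfWeight _ i2 k (extendRDF k A B g) ≤
      @rdfWeight _ i1 k g + A.card + B.card * G.degree v := by
  letI := eFin G
  letI := eFin (G.comap (Subtype.val : {w : V // w ≠ v} → V))
  obtain rfl : i2 = instFintypeSum _ _ := Subsingleton.elim _ _
  obtain rfl : i1 = instFintypeSum _ _ := Subsingleton.elim _ _
  rw [rdfWeight, rdfWeight, Fintype.sum_sum_type, Fintype.sum_sum_type]
  have part1 : ∑ u : V, (extendRDF k A B g (Sum.inl u)).card =
      (∑ w : {w : V // w ≠ v}, (g (Sum.inl w)).card) + A.card := by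
    rw [← Finset.sum_erase_add Finset.univ _ (Finset.mem_univ v)]
    congr 1
    · rw [Finset.sum_subtype (Finset.univ.erase v)
        (p := fun u : V => u ≠ v) (by simp) (fun u => (extendRDF k A B g (Sum.inl u)).card)]
      exact Finset.sum_congr rfl fun w _ => by
        rw [show extendRDF k A B g (Sum.inl w.val) = g (Sum.inl w) from
          extend_iota k A B g (Sum.inl w)]
    · show (if h : v = v then A else _).card = A.card
      rw [dif_pos rfl]
  have part2 : ∑ e : G.edgeSet, (extendRDF k A B g (Sum.inr e)).card ≤
      (∑ e' : (G.comap (Subtype.val : {w : V // w ≠ v} → V)).edgeSet,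
        (g (Sum.inr e')).card) + B.card * G.degree v := by
    rw [← Finset.sum_filter_add_sum_filter_not Finset.univ
      (fun e : G.edgeSet => v ∈ (e : Sym2 V))]
    have p2a : ∑ e ∈ Finset.univ.filter (fun e : G.edgeSet => v ∈ (e : Sym2 V)),
        (extendRDF k A B g (Sum.inr e)).card ≤ B.card * G.degree v := by
      have hconst : ∀ e ∈ Finset.univ.filter (fun e : G.edgeSet => v ∈ (e : Sym2 V)),
          (extendRDF k A B g (Sum.inr e)).card = B.card := by
        intro e he
        simp only [Finset.mem_filter] at he
        show (if h : v ∈ (e : Sym2 V) then B else _).card = B.card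
        rw [dif_pos he.2]
      rw [Finset.sum_congr rfl hconst, Finset.sum_const, smul_eq_mul, mul_comm]
      exact Nat.mul_le_mul_left _ (card_vedges_le _)
    have p2b : ∑ e ∈ Finset.univ.filter (fun e : G.edgeSet => v ∉ (e : Sym2 V)),
        (extendRDF k A B g (Sum.inr e)).card =
        ∑ e' : (G.comap (Subtype.val : {w : V // w ≠ v} → V)).edgeSet,
          (g (Sum.inr e')).card := by
      rw [Finset.sum_subtype (Finset.univ.filter (fun e : G.edgeSet => v ∉ (e : Sym2 V)))
        (p := fun e : G.edgeSet => v ∉ (e : Sym2 V)) (by simp)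
        (fun e => (extendRDF k A B g (Sum.inr e)).card)]
      refine Fintype.sum_equiv (vFreeEquiv G v) _ _ fun q => ?_
      show (if h : v ∈ (q.1 : Sym2 V) then B else g (Sum.inr (downE q.1 h))).card = _
      rw [dif_neg q.2]
      rfl
    omega
  omega

lemma lemB [DecidableRel G.Adj] (k : ℕ)
    (i1 : Fintype ({w : V // w ≠ v} ⊕ (G.comap (Subtype.val : {w : V // w ≠ v} → V)).edgeSet))
    (i2 : Fintype (V ⊕ G.edgeSet)) :
    @rdn _ i2 (middleGraph G) k ≤
      @rdn _ i1 (middleGraph (G.comap (Subtype.val : {w : V // w ≠ v} → V))) k + k := by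
  obtain ⟨g, hg, hw⟩ := @rdn_mem _ i1 (middleGraph (G.comap (Subtype.val : {w : V // w ≠ v} → V))) k
  have hRDF : IsRDF (middleGraph G) k (extendRDF k Finset.univ ∅ g) :=
    extend_isRDF k Finset.univ ∅
      (fun c h => absurd (h ▸ Finset.mem_univ c) (Finset.notMem_empty c))
      (fun _ c => Finset.mem_univ c) g hg
  have h1 := @rdn_le _ i2 (middleGraph G) k _ hRDF
  have h2 := extend_weight k Finset.univ ∅ g i1 i2
  rw [Finset.card_univ, Fintype.card_fin, Finset.card_empty] at h2
  omega

lemma lemC [DecidableRel G.Adj] (k : ℕ) (hk : k ≠ 0)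
    (i1 : Fintype ({w : V // w ≠ v} ⊕ (G.comap (Subtype.val : {w : V // w ≠ v} → V)).edgeSet))
    (i2 : Fintype (V ⊕ G.edgeSet)) :
    @rdn _ i2 (middleGraph G) k ≤
      @rdn _ i1 (middleGraph (G.comap (Subtype.val : {w : V // w ≠ v} → V))) k +
        (G.maxDegree + 1) := by
  obtain ⟨g, hg, hw⟩ := @rdn_mem _ i1 (middleGraph (G.comap (Subtype.val : {w : V // w ≠ v} → V))) k
  set c0 : Fin k := ⟨0, Nat.pos_of_ne_zero hk⟩ with hc0
  have hRDF : IsRDF (middleGraph G) k (extendRDF k {c0} {c0} g) :=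
    extend_isRDF k {c0} {c0}
      (fun _ => Finset.singleton_ne_empty c0)
      (fun h => absurd h (Finset.singleton_ne_empty c0)) g hg
  have h1 := @rdn_le _ i2 (middleGraph G) k _ hRDF
  have h2 := extend_weight k {c0} {c0} g i1 i2
  rw [Finset.card_singleton, one_mul] at h2
  have h3 := SimpleGraph.degree_le_maxDegree (G := G) v
  omega

end Helpers

/-- `γ*_{rk}(G) − min{Δ(G)+1, k} ≤ γ*_{rk}(G − v) ≤ γ*_{rk}(G)`. -/
theorem stmt2 {V : Type*} [Fintype V] [DecidableEq V] (G : SimpleGraph V)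
    [DecidableRel G.Adj] (k : ℕ) (v : V) :
    mrdn G k - min (G.maxDegree + 1) k ≤ mrdn (G.comap (Subtype.val : {w : V // w ≠ v} → V)) k ∧
    mrdn (G.comap (Subtype.val : {w : V // w ≠ v} → V)) k ≤ mrdn G k := by
  constructor
  · rw [tsub_le_iff_right]
    unfold mrdn
    rcases le_total (G.maxDegree + 1) k with h | h
    · rw [min_eq_left h]
      exact lemC k (by omega) _ _
    · rw [min_eq_right h]
      exact lemB k _ _
  · unfold mrdn
    exact lemA G v k _ _
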